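/- Let k=2, and let r, s satisfy r/2 ≤ s < r−1 (so ⌊(r−1)/s⌋ = 1). Then for n large enough that the hypergraph is nonempty, χ(KG^r_s(binom([n],2))) = 1 + n − ⌊(2r−1)/s⌋; explicitly, the chromatic number is n−1 when 2r/3 ≤ s ≤ r−2, and n−2 when r/2 ≤ s < 2r/3. -/
import Mathlib

/-- The family of all 2-subsets of `[n] = {1,…,n}`. -/
def pairs (n : ℕ) : Finset (Finset ℕ) := (Finset.Icc 1 n).powersetCard 2

/-- An edge of the Kneser hypergraph with multiplicities `KG^r_s(S)`:
an `r`-multiset of members of `S` in which each ground element occurs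
(with multiplicity) in at most `s` of the sets. -/
def KGEdge (r s : ℕ) (S : Finset (Finset ℕ)) (e : Multiset (Finset ℕ)) : Prop :=
  Multiset.card e = r ∧ (∀ A ∈ e, A ∈ S) ∧
    ∀ i : ℕ, e.countP (fun T => i ∈ T) ≤ s

/-- The chromatic number of `KG^r_s(S)`. -/
noncomputable def chromKG (r s : ℕ) (S : Finset (Finset ℕ)) : ℕ :=
  sInf {m | ∃ c : Finset ℕ → Fin m,
    ∀ e, KGEdge r s S e → ∃ A ∈ e, ∃ B ∈ e, c A ≠ c B}

/-! ### Auxiliary lemmas -/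

lemma countP_replicate' {α : Type*} (p : α → Prop) [DecidablePred p] (k : ℕ) (a : α) :
    Multiset.countP p (Multiset.replicate k a) = if p a then k else 0 := by
  induction k with
  | zero => simp
  | succ k ih =>
      rw [Multiset.replicate_succ, Multiset.countP_cons, ih]
      split <;> simp

lemma mem_pairs' {n : ℕ} {A : Finset ℕ} :
    A ∈ pairs n ↔ A ⊆ Finset.Icc 1 n ∧ A.card = 2 := by
  simp [pairs, Finset.mem_powersetCard]

lemma pair_two {n : ℕ} {A : Finset ℕ} (hA : A ∈ pairs n) :
    ∃ a b, a ≠ b ∧ A = {a, b} ∧ 1 ≤ a ∧ a ≤ n ∧ 1 ≤ b ∧ b ≤ n := by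
  obtain ⟨hsub, hcard⟩ := mem_pairs'.1 hA
  obtain ⟨a, b, hab, rfl⟩ := Finset.card_eq_two.1 hcard
  have ha := hsub (Finset.mem_insert_self a {b})
  have hb := hsub (Finset.mem_insert_of_mem (Finset.mem_singleton_self b))
  rw [Finset.mem_Icc] at ha hb
  exact ⟨a, b, hab, rfl, ha.1, ha.2, hb.1, hb.2⟩

lemma pair_other {B : Finset ℕ} (h : B.card = 2) {b : ℕ} (hb : b ∈ B) :
    ∃ d, d ≠ b ∧ B = {b, d} := by
  obtain ⟨x, y, hxy, rfl⟩ := Finset.card_eq_two.1 h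
  rcases Finset.mem_insert.mp hb with rfl | hb
  · exact ⟨y, hxy.symm, rfl⟩
  · rw [Finset.mem_singleton] at hb
    subst hb
    exact ⟨x, hxy, by rw [Finset.pair_comm]⟩

lemma pair_sup {n : ℕ} {A : Finset ℕ} (hA : A ∈ pairs n) :
    A.sup id ∈ A ∧ 2 ≤ A.sup id ∧ A.sup id ≤ n := by
  obtain ⟨a, b, hab, rfl, h1a, h2a, h1b, h2b⟩ := pair_two hA
  have hs : ({a, b} : Finset ℕ).sup id = max a b := by
    simp [Finset.sup_insert, Finset.sup_singleton]
  rw [hs]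
  rcases le_total a b with h | h
  · rw [max_eq_right h]
    exact ⟨by simp, by omega, by omega⟩
  · rw [max_eq_left h]
    exact ⟨by simp, by omega, by omega⟩

lemma tri_sum (e : Multiset (Finset ℕ)) (h : ∀ T ∈ e, T ⊆ Finset.Icc 1 3 ∧ T.card = 2) :
    e.countP (fun T => 1 ∈ T) + e.countP (fun T => 2 ∈ T) + e.countP (fun T => 3 ∈ T)
      = 2 * Multiset.card e := by
  induction e using Multiset.induction_on with
  | empty => simp
  | cons a e ih =>
      have ha := h a (Multiset.mem_cons_self a e)
      have he' : ∀ T ∈ e, T ⊆ Finset.Icc 1 3 ∧ T.card = 2 :=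
        fun T hT => h T (Multiset.mem_cons_of_mem hT)
      rw [Multiset.countP_cons, Multiset.countP_cons, Multiset.countP_cons,
        Multiset.card_cons]
      have h2 : (if 1 ∈ a then 1 else 0) + (if 2 ∈ a then 1 else 0)
          + (if 3 ∈ a then 1 else 0) = 2 := by
        obtain ⟨x, y, hxy, rfl⟩ := Finset.card_eq_two.1 ha.2
        have hx := ha.1 (Finset.mem_insert_self x {y})
        have hy := ha.1 (Finset.mem_insert_of_mem (Finset.mem_singleton_self y))
        rw [Finset.mem_Icc] at hx hy
        obtain ⟨hx1, hx2⟩ := hx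
        obtain ⟨hy1, hy2⟩ := hy
        interval_cases x <;> interval_cases y <;> simp_all
      have := ih he'
      omega

section Main

variable {n r s m : ℕ}

lemma edge_two (h1 : r ≤ 2 * s) (h2 : s < r) {A B : Finset ℕ}
    (hA : A ∈ pairs n) (hB : B ∈ pairs n) (hd : Disjoint A B) :
    KGEdge r s (pairs n) (Multiset.replicate s A + Multiset.replicate (r - s) B) := by
  refine ⟨by simp; omega, ?_, ?_⟩
  · intro T hT
    rcases Multiset.mem_add.1 hT with h | h
    · rwa [Multiset.eq_of_mem_replicate h]
    · rwa [Multiset.eq_of_mem_replicate h]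
  · intro i
    rw [Multiset.countP_add, countP_replicate', countP_replicate']
    by_cases hiA : i ∈ A <;> by_cases hiB : i ∈ B
    · exact absurd hiB (Finset.disjoint_left.1 hd hiA)
    · simp [hiA, hiB]
    · simp [hiA, hiB]; omega
    · simp [hiA, hiB]

lemma not_disjoint (h1 : r ≤ 2 * s) (h2 : s + 1 < r)
    (c : Finset ℕ → Fin m)
    (hc : ∀ e, KGEdge r s (pairs n) e → ∃ A ∈ e, ∃ B ∈ e, c A ≠ c B)
    {A B : Finset ℕ} (hA : A ∈ pairs n) (hB : B ∈ pairs n) (hcol : c A = c B) :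
    ¬ Disjoint A B := by
  intro hd
  obtain ⟨X, hX, Y, hY, hXY⟩ := hc _ (edge_two h1 (by omega) hA hB hd)
  have hmem : ∀ T ∈ (Multiset.replicate s A + Multiset.replicate (r - s) B), c T = c A := by
    intro T hT
    rcases Multiset.mem_add.1 hT with h | h
    · rw [Multiset.eq_of_mem_replicate h]
    · rw [Multiset.eq_of_mem_replicate h, hcol]
  exact hXY (by rw [hmem X hX, hmem Y hY])

lemma edge_tri (h2 : s + 1 < r) (h3 : 2 * r ≤ 3 * s) {A B C : Finset ℕ}
    (hA : A ∈ pairs n) (hB : B ∈ pairs n) (hC : C ∈ pairs n)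
    (hnc : ∀ i : ℕ, ¬(i ∈ A ∧ i ∈ B ∧ i ∈ C)) :
    KGEdge r s (pairs n)
      (Multiset.replicate (r / 3) A + Multiset.replicate (r / 3) B +
        Multiset.replicate (r - 2 * (r / 3)) C) := by
  refine ⟨by simp; omega, ?_, ?_⟩
  · intro T hT
    rcases Multiset.mem_add.1 hT with h | h
    · rcases Multiset.mem_add.1 h with h' | h'
      · rwa [Multiset.eq_of_mem_replicate h']
      · rwa [Multiset.eq_of_mem_replicate h']
    · rwa [Multiset.eq_of_mem_replicate h]
  · intro i
    rw [Multiset.countP_add, Multiset.countP_add, countP_replicate', countP_replicate',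
      countP_replicate']
    by_cases hiA : i ∈ A <;> by_cases hiB : i ∈ B <;> by_cases hiC : i ∈ C
    · exact absurd ⟨hiA, hiB, hiC⟩ (hnc i)
    all_goals simp [hiA, hiB, hiC] <;> omega

/-- Every monochromatic class of a proper coloring is a star or (contained in) a triangle. -/
lemma class_cases (h1 : r ≤ 2 * s) (h2 : s + 1 < r)
    (c : Finset ℕ → Fin m)
    (hc : ∀ e, KGEdge r s (pairs n) e → ∃ A ∈ e, ∃ B ∈ e, c A ≠ c B) (i : Fin m) :
    (∃ v, ∀ A ∈ pairs n, c A = i → v ∈ A) ∨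
    (∃ a b d : ℕ,
      ({a, b} ∈ pairs n ∧ c {a, b} = i) ∧ ({b, d} ∈ pairs n ∧ c {b, d} = i) ∧
      ({a, d} ∈ pairs n ∧ c {a, d} = i) ∧ a ≠ b ∧ a ≠ d ∧ b ≠ d ∧
      ∀ A ∈ pairs n, c A = i → A ⊆ {a, b, d}) := by
  classical
  by_cases hcl : ∃ A₀ ∈ pairs n, c A₀ = i
  swap
  · push_neg at hcl
    exact Or.inl ⟨0, fun A hA hcA => absurd hcA (hcl A hA)⟩
  obtain ⟨A₀, hA₀, hcA₀⟩ := hcl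
  have meet : ∀ P ∈ pairs n, ∀ Q ∈ pairs n, c P = i → c Q = i → ∃ x, x ∈ P ∧ x ∈ Q := by
    intro P hP Q hQ hcP hcQ
    exact Finset.not_disjoint_iff.1 (not_disjoint h1 h2 c hc hP hQ (hcP.trans hcQ.symm))
  obtain ⟨a, b, hab, rfl, _, _, _, _⟩ := pair_two hA₀
  by_cases hclA : ∀ A ∈ pairs n, c A = i → a ∈ A
  · exact Or.inl ⟨a, hclA⟩
  by_cases hclB : ∀ A ∈ pairs n, c A = i → b ∈ A
  · exact Or.inl ⟨b, hclB⟩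
  push_neg at hclA hclB
  obtain ⟨B, hB, hcB, haB⟩ := hclA
  obtain ⟨C, hC, hcC, hbC⟩ := hclB
  have hbB : b ∈ B := by
    obtain ⟨x, hx1, hx2⟩ := meet _ hA₀ _ hB hcA₀ hcB
    rcases Finset.mem_insert.mp hx1 with rfl | hx1
    · exact absurd hx2 haB
    · rw [Finset.mem_singleton] at hx1; subst hx1; exact hx2
  have haC : a ∈ C := by
    obtain ⟨x, hx1, hx2⟩ := meet _ hA₀ _ hC hcA₀ hcC
    rcases Finset.mem_insert.mp hx1 with rfl | hx1
    · exact hx2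
    · rw [Finset.mem_singleton] at hx1; subst hx1; exact absurd hx2 hbC
  obtain ⟨d, hdb, rfl⟩ := pair_other (mem_pairs'.1 hB).2 hbB
  obtain ⟨d', hd'a, rfl⟩ := pair_other (mem_pairs'.1 hC).2 haC
  have hdd : d = d' := by
    obtain ⟨x, hx1, hx2⟩ := meet _ hB _ hC hcB hcC
    rcases Finset.mem_insert.mp hx1 with rfl | hx1
    · exact absurd hx2 hbC
    · rw [Finset.mem_singleton] at hx1
      rw [hx1, Finset.mem_insert, Finset.mem_singleton] at hx2
      rcases hx2 with h | h
      · exfalso; apply haB; rw [← h]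
        exact Finset.mem_insert_of_mem (Finset.mem_singleton_self d)
      · exact h
  subst hdd
  have had : a ≠ d := by
    intro h; subst h
    exact haB (Finset.mem_insert_of_mem (Finset.mem_singleton_self a))
  refine Or.inr ⟨a, b, d, ⟨hA₀, hcA₀⟩, ⟨hB, hcB⟩, ⟨hC, hcC⟩, hab, had, fun h => hdb h.symm, ?_⟩
  intro A hA hcA
  intro z hz
  by_contra hzn
  rw [Finset.mem_insert, Finset.mem_insert, Finset.mem_singleton] at hzn
  push_neg at hzn
  obtain ⟨hza, hzb, hzd⟩ := hzn
  obtain ⟨w, hwz, rfl⟩ := pair_other (mem_pairs'.1 hA).2 hz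
  have hw1 : w ∈ ({a, b} : Finset ℕ) := by
    obtain ⟨x, hx1, hx2⟩ := meet _ hA _ hA₀ hcA hcA₀
    rcases Finset.mem_insert.mp hx1 with rfl | hx1
    · rw [Finset.mem_insert, Finset.mem_singleton] at hx2; omega
    · rw [Finset.mem_singleton] at hx1; subst hx1; exact hx2
  have hw2 : w ∈ ({b, d} : Finset ℕ) := by
    obtain ⟨x, hx1, hx2⟩ := meet _ hA _ hB hcA hcB
    rcases Finset.mem_insert.mp hx1 with rfl | hx1
    · rw [Finset.mem_insert, Finset.mem_singleton] at hx2; omega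
    · rw [Finset.mem_singleton] at hx1; subst hx1; exact hx2
  have hw3 : w ∈ ({a, d} : Finset ℕ) := by
    obtain ⟨x, hx1, hx2⟩ := meet _ hA _ hC hcA hcC
    rcases Finset.mem_insert.mp hx1 with rfl | hx1
    · rw [Finset.mem_insert, Finset.mem_singleton] at hx2; omega
    · rw [Finset.mem_singleton] at hx1; subst hx1; exact hx2
  rw [Finset.mem_insert, Finset.mem_singleton] at hw1 hw2 hw3
  omega


lemma mono_tri_bad (h1 : r ≤ 2 * s) (h2 : s + 1 < r) (h3 : 2 * r ≤ 3 * s)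
    (c : Finset ℕ → Fin m)
    (hc : ∀ e, KGEdge r s (pairs n) e → ∃ A ∈ e, ∃ B ∈ e, c A ≠ c B)
    {a b d : ℕ} (hab : a ≠ b) (had : a ≠ d) (hbd : b ≠ d)
    (h₁ : {a, b} ∈ pairs n) (h₂ : {b, d} ∈ pairs n) (h₃ : {a, d} ∈ pairs n)
    (e₁ : c {a, b} = c {b, d}) (e₂ : c {a, b} = c {a, d}) : False := by
  have hnc : ∀ i : ℕ, ¬(i ∈ ({a, b} : Finset ℕ) ∧ i ∈ ({b, d} : Finset ℕ) ∧
      i ∈ ({a, d} : Finset ℕ)) := by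
    intro x hx
    obtain ⟨hx1, hx2, hx3⟩ := hx
    rw [Finset.mem_insert, Finset.mem_singleton] at hx1 hx2 hx3
    omega
  obtain ⟨X, hX, Y, hY, hXY⟩ := hc _ (edge_tri h2 h3 h₁ h₂ h₃ hnc)
  have hmem : ∀ T ∈ (Multiset.replicate (r / 3) ({a, b} : Finset ℕ) +
      Multiset.replicate (r / 3) ({b, d} : Finset ℕ) +
      Multiset.replicate (r - 2 * (r / 3)) ({a, d} : Finset ℕ)), c T = c {a, b} := by
    intro T hT
    rcases Multiset.mem_add.1 hT with h | h
    · rcases Multiset.mem_add.1 h with h' | h'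
      · rw [Multiset.eq_of_mem_replicate h']
      · rw [Multiset.eq_of_mem_replicate h', ← e₁]
    · rw [Multiset.eq_of_mem_replicate h, ← e₂]
  exact hXY (by rw [hmem X hX, hmem Y hY])

lemma lower_star (h1 : r ≤ 2 * s) (h2 : s + 1 < r) (h3 : 2 * r ≤ 3 * s)
    (c : Finset ℕ → Fin m)
    (hc : ∀ e, KGEdge r s (pairs n) e → ∃ A ∈ e, ∃ B ∈ e, c A ≠ c B) :
    n ≤ m + 1 := by
  classical
  have hstar : ∀ i : Fin m, ∃ v, ∀ A ∈ pairs n, c A = i → v ∈ A := by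
    intro i
    rcases class_cases h1 h2 c hc i with h | ⟨a, b, d, ⟨hp1, hc1⟩, ⟨hp2, hc2⟩, ⟨hp3, hc3⟩,
      hab, had, hbd, _⟩
    · exact h
    · exact absurd (mono_tri_bad h1 h2 h3 c hc hab had hbd hp1 hp2 hp3
        (hc1.trans hc2.symm) (hc1.trans hc3.symm)) not_false
  choose f hf using hstar
  have hT : ((Finset.Icc 1 n) \ Finset.univ.image f).card ≤ 1 := by
    rw [Finset.card_le_one]
    intro u hu w hw
    by_contra huw
    have hp : ({u, w} : Finset ℕ) ∈ pairs n := by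
      rw [mem_pairs']
      constructor
      · intro x hx
        rw [Finset.mem_insert, Finset.mem_singleton] at hx
        rcases hx with rfl | rfl
        · exact (Finset.mem_sdiff.1 hu).1
        · exact (Finset.mem_sdiff.1 hw).1
      · exact Finset.card_pair huw
    have hfm := hf (c {u, w}) {u, w} hp rfl
    rw [Finset.mem_insert, Finset.mem_singleton] at hfm
    have hmem : f (c {u, w}) ∈ Finset.univ.image f :=
      Finset.mem_image_of_mem f (Finset.mem_univ _)
    rcases hfm with h | h <;> rw [h] at hmem
    · exact (Finset.mem_sdiff.1 hu).2 hmem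
    · exact (Finset.mem_sdiff.1 hw).2 hmem
  have hcov : (Finset.Icc 1 n) ⊆ (Finset.univ.image f) ∪
      ((Finset.Icc 1 n) \ Finset.univ.image f) := by
    intro x hx
    rw [Finset.mem_union, Finset.mem_sdiff]
    by_cases h : x ∈ Finset.univ.image f
    · exact Or.inl h
    · exact Or.inr ⟨hx, h⟩
  have h5 := (Finset.card_le_card hcov).trans (Finset.card_union_le _ _)
  have himg : (Finset.univ.image f).card ≤ m := by
    refine Finset.card_image_le.trans ?_
    simp
  rw [Nat.card_Icc] at h5
  omega

lemma lower_tri (h1 : r ≤ 2 * s) (h2 : s + 1 < r)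
    (c : Finset ℕ → Fin m)
    (hc : ∀ e, KGEdge r s (pairs n) e → ∃ A ∈ e, ∃ B ∈ e, c A ≠ c B) :
    n ≤ m + 2 := by
  classical
  have hst : ∀ i : Fin m, ∃ v, ∃ S : Finset ℕ,
      (∀ A ∈ pairs n, c A = i → v ∈ A) ∨
      ((∀ A ∈ pairs n, c A = i → A ⊆ S) ∧ S.card = 3) := by
    intro i
    rcases class_cases h1 h2 c hc i with ⟨v, hv⟩ | ⟨a, b, d, _, _, _, hab, had, hbd, hsub⟩
    · exact ⟨v, ∅, Or.inl hv⟩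
    · refine ⟨0, {a, b, d}, Or.inr ⟨hsub, ?_⟩⟩
      rw [Finset.card_insert_of_notMem (by simp [hab, had]),
        Finset.card_insert_of_notMem (by simp [hbd]), Finset.card_singleton]
  choose f g hfg using hst
  set St : Finset (Fin m) :=
    Finset.univ.filter (fun i : Fin m => ∀ A ∈ pairs n, c A = i → f i ∈ A) with hSt
  set U : Finset ℕ := Finset.Icc 1 n \ St.image f with hU
  have htri : ∀ i : Fin m, i ∉ St →
      (∀ A ∈ pairs n, c A = i → A ⊆ g i) ∧ (g i).card = 3 := by
    intro i hi
    rcases hfg i with h | h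
    · exact absurd (Finset.mem_filter.2 ⟨Finset.mem_univ _, h⟩) hi
    · exact h
  have hcount : (U.powersetCard 2) ⊆
      (Finset.univ \ St).biUnion (fun i => (g i).powersetCard 2) := by
    intro P hP
    rw [Finset.mem_powersetCard] at hP
    obtain ⟨hPU, hP2⟩ := hP
    have hPp : P ∈ pairs n := by
      rw [mem_pairs']
      exact ⟨hPU.trans (Finset.sdiff_subset), hP2⟩
    have hci : c P ∉ St := by
      intro hin
      have := (Finset.mem_filter.1 hin).2 P hPp rfl
      have hmem : f (c P) ∈ St.image f := Finset.mem_image_of_mem f hin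
      exact (Finset.mem_sdiff.1 (hPU this)).2 hmem
    rw [Finset.mem_biUnion]
    refine ⟨c P, by rw [Finset.mem_sdiff]; exact ⟨Finset.mem_univ _, hci⟩, ?_⟩
    rw [Finset.mem_powersetCard]
    exact ⟨(htri _ hci).1 P hPp rfl, hP2⟩
  have hcard1 : U.card.choose 2 ≤ (Finset.univ \ St).card * 3 := by
    rw [← Finset.card_powersetCard]
    refine (Finset.card_le_card hcount).trans ?_
    refine Finset.card_biUnion_le_card_mul _ _ _ ?_
    intro i hi
    rw [Finset.card_powersetCard, (htri i (Finset.mem_sdiff.1 hi).2).2]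
    decide
  have hcov : (Finset.Icc 1 n) ⊆ (St.image f) ∪ U := by
    intro x hx
    rw [Finset.mem_union, hU, Finset.mem_sdiff]
    by_cases h : x ∈ St.image f
    · exact Or.inl h
    · exact Or.inr ⟨hx, h⟩
  have h5 := (Finset.card_le_card hcov).trans (Finset.card_union_le _ _)
  rw [Nat.card_Icc] at h5
  have himg : (St.image f).card ≤ St.card := Finset.card_image_le
  have hStm : St.card ≤ m := by
    refine (Finset.card_le_card (Finset.subset_univ St)).trans ?_
    simp
  have hcompl : (Finset.univ \ St).card = m - St.card := by
    rw [Finset.card_sdiff_of_subset (Finset.subset_univ St)]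
    simp
  rw [hcompl] at hcard1
  rw [Nat.choose_two_right] at hcard1
  -- final arithmetic
  set u := U.card
  set a := St.card
  rcases le_or_gt u 3 with h | h
  · interval_cases u <;> omega
  · obtain ⟨v, hv⟩ := Nat.exists_eq_add_of_le h
    have hveq : u = 4 + v := by omega
    rw [hveq] at hcard1 h5
    have h41 : 4 + v - 1 = 3 + v := by omega
    rw [h41] at hcard1
    have hprod : (4 + v) * (3 + v) = v * v + 7 * v + 12 := by ring
    rw [hprod] at hcard1
    have hdiv : 3 * v + 6 ≤ (v * v + 7 * v + 12) / 2 := by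
      rw [Nat.le_div_iff_mul_le (by norm_num)]
      nlinarith [Nat.zero_le (v * v)]
    omega

lemma n_ge_three (h2 : s + 1 < r)
    (hne : ∃ e, KGEdge r s (pairs n) e) : 3 ≤ n := by
  obtain ⟨e, hcard, hmem, hcov⟩ := hne
  have he : ∃ A, A ∈ e := by
    rw [← Multiset.card_pos_iff_exists_mem]
    omega
  obtain ⟨A₀, hA₀⟩ := he
  obtain ⟨hsub, hc2⟩ := mem_pairs'.1 (hmem A₀ hA₀)
  have hn2 : 2 ≤ n := by
    have := Finset.card_le_card hsub
    rw [Nat.card_Icc] at this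
    omega
  by_contra hn
  have hn' : n = 2 := by omega
  subst hn'
  have hall : ∀ T ∈ e, (1 : ℕ) ∈ T := by
    intro T hT
    obtain ⟨hsubT, hcT⟩ := mem_pairs'.1 (hmem T hT)
    have hIcc : (Finset.Icc 1 2).card ≤ T.card := by
      rw [Nat.card_Icc, hcT]
    have := Finset.eq_of_subset_of_card_le hsubT hIcc
    rw [this]
    decide
  have := hcov 1
  rw [Multiset.countP_eq_card.2 hall, hcard] at this
  omega

lemma n_ge_four (h2 : s + 1 < r) (h3 : 3 * s < 2 * r)
    (hne : ∃ e, KGEdge r s (pairs n) e) : 4 ≤ n := by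
  have hn3 := n_ge_three h2 hne
  by_contra hn
  have hn' : n = 3 := by omega
  subst hn'
  obtain ⟨e, hcard, hmem, hcov⟩ := hne
  have hall : ∀ T ∈ e, T ⊆ Finset.Icc 1 3 ∧ T.card = 2 :=
    fun T hT => mem_pairs'.1 (hmem T hT)
  have := tri_sum e hall
  have h1 := hcov 1
  have hc2 := hcov 2
  have hc3 := hcov 3
  rw [hcard] at this
  omega

lemma upper_star (hn : 3 ≤ n) (h2 : s + 1 < r) :
    ∃ c : Finset ℕ → Fin (n - 1),
      ∀ e, KGEdge r s (pairs n) e → ∃ A ∈ e, ∃ B ∈ e, c A ≠ c B := by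
  refine ⟨fun A => ⟨min (A.sup id - 2) (n - 2), by omega⟩, ?_⟩
  intro e he
  by_contra hmono
  push_neg at hmono
  obtain ⟨hcard, hmem, hcov⟩ := he
  have hene : ∃ A, A ∈ e := by
    rw [← Multiset.card_pos_iff_exists_mem]
    omega
  obtain ⟨A₀, hA₀⟩ := hene
  obtain ⟨hj0, hj1, hj2⟩ := pair_sup (hmem A₀ hA₀)
  have hall : ∀ T ∈ e, A₀.sup id ∈ T := by
    intro T hT
    obtain ⟨ht0, ht1, ht2⟩ := pair_sup (hmem T hT)
    have hceq := hmono T hT A₀ hA₀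
    have hveq : min (T.sup id - 2) (n - 2) = min (A₀.sup id - 2) (n - 2) :=
      congrArg Fin.val hceq
    have : T.sup id = A₀.sup id := by omega
    rw [← this]
    exact ht0
  have := hcov (A₀.sup id)
  rw [Multiset.countP_eq_card.2 hall, hcard] at this
  omega

lemma upper_tri (hn : 4 ≤ n) (h2 : s + 1 < r) (h3 : 3 * s < 2 * r) :
    ∃ c : Finset ℕ → Fin (n - 2),
      ∀ e, KGEdge r s (pairs n) e → ∃ A ∈ e, ∃ B ∈ e, c A ≠ c B := by
  refine ⟨fun A => if A.sup id ≤ 3 then ⟨0, by omega⟩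
    else ⟨min (A.sup id - 3) (n - 3), by omega⟩, ?_⟩
  intro e he
  by_contra hmono
  push_neg at hmono
  obtain ⟨hcard, hmem, hcov⟩ := he
  have hene : ∃ A, A ∈ e := by
    rw [← Multiset.card_pos_iff_exists_mem]
    omega
  obtain ⟨A₀, hA₀⟩ := hene
  obtain ⟨hj0, hj1, hj2⟩ := pair_sup (hmem A₀ hA₀)
  by_cases h0 : A₀.sup id ≤ 3
  · -- all members are inside {1,2,3}
    have hall : ∀ T ∈ e, T ⊆ Finset.Icc 1 3 ∧ T.card = 2 := by
      intro T hT
      obtain ⟨hsubT, hcT⟩ := mem_pairs'.1 (hmem T hT)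
      obtain ⟨ht0, ht1, ht2⟩ := pair_sup (hmem T hT)
      have hceq := hmono T hT A₀ hA₀
      rw [if_pos h0] at hceq
      have hTle : T.sup id ≤ 3 := by
        by_contra hTgt
        rw [if_neg hTgt] at hceq
        have hveq : min (T.sup id - 3) (n - 3) = 0 := congrArg Fin.val hceq
        omega
      refine ⟨?_, hcT⟩
      intro x hx
      have hx1 := hsubT hx
      rw [Finset.mem_Icc] at hx1 ⊢
      have : x ≤ T.sup id := Finset.le_sup (f := id) hx
      omega
    have := tri_sum e hall
    have hc1 := hcov 1
    have hc2 := hcov 2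
    have hc3 := hcov 3
    rw [hcard] at this
    omega
  · have hall : ∀ T ∈ e, A₀.sup id ∈ T := by
      intro T hT
      obtain ⟨ht0, ht1, ht2⟩ := pair_sup (hmem T hT)
      have hceq := hmono T hT A₀ hA₀
      rw [if_neg h0] at hceq
      have hTgt : ¬ T.sup id ≤ 3 := by
        by_contra hTle
        rw [if_pos hTle] at hceq
        have hveq : (0 : ℕ) = min (A₀.sup id - 3) (n - 3) := congrArg Fin.val hceq
        omega
      rw [if_neg hTgt] at hceq
      have hveq : min (T.sup id - 3) (n - 3) = min (A₀.sup id - 3) (n - 3) :=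
        congrArg Fin.val hceq
      have : T.sup id = A₀.sup id := by omega
      rw [← this]
      exact ht0
    have := hcov (A₀.sup id)
    rw [Multiset.countP_eq_card.2 hall, hcard] at this
    omega

end Main


/-- For `k = 2` and `r/2 ≤ s < r-1` (so `⌊(r-1)/s⌋ = 1`), and `n` large enough
that the hypergraph is nonempty:
`χ(KG^r_s(binom([n],2))) = 1 + n - ⌊(2r-1)/s⌋`; explicitly, it is `n-1` if
`2r/3 ≤ s` and `n-2` if `s < 2r/3`. -/
theorem stmt17 (n r s : ℕ) (h1 : r ≤ 2 * s) (h2 : s + 1 < r)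
    (hne : ∃ e, KGEdge r s (pairs n) e) :
    chromKG r s (pairs n) = 1 + n - (2 * r - 1) / s ∧
    (2 * r ≤ 3 * s → chromKG r s (pairs n) = n - 1) ∧
    (3 * s < 2 * r → chromKG r s (pairs n) = n - 2) := by
  have hs2 : 2 ≤ s := by omega
  have hn3 : 3 ≤ n := n_ge_three h2 hne
  have hA : 2 * r ≤ 3 * s → chromKG r s (pairs n) = n - 1 := by
    intro h3
    obtain ⟨c, hc⟩ := upper_star hn3 h2 (s := s)
    have hmem : (n - 1) ∈ {m | ∃ c : Finset ℕ → Fin m,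
        ∀ e, KGEdge r s (pairs n) e → ∃ A ∈ e, ∃ B ∈ e, c A ≠ c B} := ⟨c, hc⟩
    refine le_antisymm (Nat.sInf_le hmem) ?_
    refine le_csInf ⟨n - 1, hmem⟩ ?_
    rintro m ⟨c', hc'⟩
    have := lower_star h1 h2 h3 c' hc'
    omega
  have hB : 3 * s < 2 * r → chromKG r s (pairs n) = n - 2 := by
    intro h3
    have hn4 : 4 ≤ n := n_ge_four h2 h3 hne
    obtain ⟨c, hc⟩ := upper_tri hn4 h2 h3
    have hmem : (n - 2) ∈ {m | ∃ c : Finset ℕ → Fin m,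
        ∀ e, KGEdge r s (pairs n) e → ∃ A ∈ e, ∃ B ∈ e, c A ≠ c B} := ⟨c, hc⟩
    refine le_antisymm (Nat.sInf_le hmem) ?_
    refine le_csInf ⟨n - 2, hmem⟩ ?_
    rintro m ⟨c', hc'⟩
    have := lower_tri h1 h2 c' hc'
    omega
  refine ⟨?_, hA, hB⟩
  rcases le_or_gt (2 * r) (3 * s) with h3 | h3
  · have hdiv : (2 * r - 1) / s = 2 :=
      Nat.div_eq_of_lt_le (by omega) (by omega)
    rw [hdiv, hA h3]
    omega
  · have hdiv : (2 * r - 1) / s = 3 :=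
      Nat.div_eq_of_lt_le (by omega) (by omega)
    rw [hdiv, hB h3]
    omega
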